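/- Let (M,d) be a length space: for all x,y∈M and ε>0 there exists a Lipschitz curve σ:[0,1]→M from x to y whose length (total variation) is at most d(x,y)+ε. Let I⊆ℝ be an interval and (t₀,x₀),(t₁,x₁)∈I×M. Then the following are equivalent: (i) t₀<t₁−d(x₀,x₁); (ii) t₀<t₁ and there exist a constant K<1 and a K-Lipschitz curve c:[t₀,t₁]→M with c(t₀)=x₀ and c(t₁)=x₁. -/

import Mathlib

open Set
open scoped ENNReal NNReal

/-- A helper: the variation function of a Lipschitz map on `Icc 0 1` is Lipschitz. -/
private lemma variation_lip {M : Type*} [MetricSpace M] {σ : ℝ → M} {K₀ : ℝ≥0}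
    (hσ : LipschitzOnWith K₀ σ (Set.Icc (0:ℝ) 1)) :
    LipschitzOnWith K₀ (variationOnFromTo σ (Set.Icc (0:ℝ) 1) 0) (Set.Icc (0:ℝ) 1) := by
  have hbv : LocallyBoundedVariationOn σ (Set.Icc (0:ℝ) 1) :=
    hσ.locallyBoundedVariationOn
  rw [lipschitzOnWith_iff_dist_le_mul]
  intro x hx y hy
  wlog hxy : y ≤ x generalizing x y
  · rw [dist_comm, dist_comm x y]; exact this y hy x hx (le_of_not_ge hxy)
  have h0 : (0:ℝ) ∈ Set.Icc (0:ℝ) 1 := by constructor <;> norm_num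
  have hadd := variationOnFromTo.add hbv h0 hy hx
  have hkey : variationOnFromTo σ (Set.Icc (0:ℝ) 1) y x ≤ K₀ * (x - y) := by
    rw [variationOnFromTo.eq_of_le _ _ hxy]
    have h1 : eVariationOn σ (Set.Icc (0:ℝ) 1 ∩ Set.Icc y x) ≤
        ENNReal.ofReal (K₀ * (x - y)) := by
      calc eVariationOn σ (Set.Icc (0:ℝ) 1 ∩ Set.Icc y x)
          = eVariationOn (σ ∘ id) (Set.Icc (0:ℝ) 1 ∩ Set.Icc y x) := rfl
        _ ≤ (K₀ : ℝ≥0∞) * eVariationOn id (Set.Icc (0:ℝ) 1 ∩ Set.Icc y x) :=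
            hσ.comp_eVariationOn_le (fun z hz => hz.1)
        _ ≤ (K₀ : ℝ≥0∞) * ENNReal.ofReal (x - y) := by
            gcongr
            have : eVariationOn (id : ℝ → ℝ) (Set.Icc y x ∩ Set.Icc y x) ≤
                ENNReal.ofReal (id x - id y) :=
              (monotoneOn_id (s := Set.Icc y x)).eVariationOn_le
                ⟨le_rfl, hxy⟩ ⟨hxy, le_rfl⟩
            rw [Set.inter_self] at this
            exact le_trans (eVariationOn.mono _ (Set.inter_subset_right)) this
        _ = ENNReal.ofReal (K₀ * (x - y)) := by
            rw [ENNReal.ofReal_mul (by positivity)]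
            simp [ENNReal.ofReal_coe_nnreal]
    calc (eVariationOn σ (Set.Icc (0:ℝ) 1 ∩ Set.Icc y x)).toReal
        ≤ (ENNReal.ofReal (K₀ * (x - y))).toReal :=
          ENNReal.toReal_mono ENNReal.ofReal_ne_top h1
      _ = K₀ * (x - y) := ENNReal.toReal_ofReal (mul_nonneg K₀.coe_nonneg (by linarith))
  have hnn : 0 ≤ variationOnFromTo σ (Set.Icc (0:ℝ) 1) y x :=
    variationOnFromTo.nonneg_of_le _ _ hxy
  rw [Real.dist_eq, Real.dist_eq]
  have : variationOnFromTo σ (Set.Icc (0:ℝ) 1) 0 x -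
      variationOnFromTo σ (Set.Icc (0:ℝ) 1) 0 y =
      variationOnFromTo σ (Set.Icc (0:ℝ) 1) y x := by linarith [hadd]
  rw [abs_of_nonneg (by linarith), this, abs_of_nonneg (by linarith)]
  exact hkey

/-- Let `(M,d)` be a length space: for all `x, y ∈ M` and `ε > 0` there is a
Lipschitz curve `σ : [0,1] → M` from `x` to `y` whose length (total variation) is at most
`d(x,y) + ε`. Let `I ⊆ ℝ` be an interval and `(t₀,x₀), (t₁,x₁) ∈ I × M`. Then
`t₀ < t₁ - d(x₀,x₁)` iff `t₀ < t₁` and there are `K < 1` and a `K`-Lipschitz curve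
`c : [t₀,t₁] → M` with `c t₀ = x₀` and `c t₁ = x₁`. -/
theorem stmt4 {M : Type*} [MetricSpace M]
    (hlength : ∀ x y : M, ∀ ε : ℝ, 0 < ε → ∃ σ : ℝ → M,
      (∃ K : ℝ≥0, LipschitzOnWith K σ (Set.Icc (0 : ℝ) 1)) ∧ σ 0 = x ∧ σ 1 = y ∧
        eVariationOn σ (Set.Icc (0 : ℝ) 1) ≤ ENNReal.ofReal (dist x y + ε))
    (I : Set ℝ) (hI : I.OrdConnected)
    (t₀ t₁ : ℝ) (x₀ x₁ : M) (ht₀ : t₀ ∈ I) (ht₁ : t₁ ∈ I) :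
    t₀ < t₁ - dist x₀ x₁ ↔
      t₀ < t₁ ∧ ∃ K : ℝ≥0, (K : ℝ) < 1 ∧ ∃ c : ℝ → M,
        LipschitzOnWith K c (Set.Icc t₀ t₁) ∧ c t₀ = x₀ ∧ c t₁ = x₁ := by
  constructor
  · -- forward direction
    intro h
    have hd : (0:ℝ) ≤ dist x₀ x₁ := dist_nonneg
    have ht : t₀ < t₁ := by linarith
    refine ⟨ht, ?_⟩
    set T : ℝ := t₁ - t₀ with hT
    have hTpos : 0 < T := by simp [hT]; linarith
    set ε : ℝ := (T - dist x₀ x₁) / 2 with hε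
    have hεpos : 0 < ε := by simp only [hε]; linarith
    have hdεT : dist x₀ x₁ + ε < T := by simp only [hε]; linarith
    obtain ⟨σ, ⟨K₀, hσlip⟩, hσ0, hσ1, hσvar⟩ := hlength x₀ x₁ ε hεpos
    set s : Set ℝ := Set.Icc (0:ℝ) 1 with hs
    have h0s : (0:ℝ) ∈ s := by constructor <;> norm_num
    have h1s : (1:ℝ) ∈ s := by constructor <;> norm_num
    have hbv : LocallyBoundedVariationOn σ s := hσlip.locallyBoundedVariationOn
    set V : ℝ → ℝ := variationOnFromTo σ s 0 with hV
    set L : ℝ := V 1 with hL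
    have hV0 : V 0 = 0 := variationOnFromTo.self σ s 0
    have hLnn : 0 ≤ L := variationOnFromTo.nonneg_of_le σ s (by norm_num)
    have hLle : L ≤ dist x₀ x₁ + ε := by
      have : V 1 = (eVariationOn σ (s ∩ Set.Icc (0:ℝ) 1)).toReal :=
        variationOnFromTo.eq_of_le σ s (by norm_num)
      rw [hL, this, hs, Set.inter_self]
      calc (eVariationOn σ (Set.Icc (0:ℝ) 1)).toReal
          ≤ (ENNReal.ofReal (dist x₀ x₁ + ε)).toReal :=
            ENNReal.toReal_mono ENNReal.ofReal_ne_top hσvar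
        _ = dist x₀ x₁ + ε := ENNReal.toReal_ofReal (by positivity)
    have hLT : L < T := lt_of_le_of_lt hLle hdεT
    -- the unit-speed reparameterization
    set g : ℝ → M := naturalParameterization σ s 0 with hg
    have hgspeed : HasUnitSpeedOn g (V '' s) :=
      has_unit_speed_naturalParameterization σ hbv h0s
    -- g is 1-Lipschitz on V '' s
    have hglip : ∀ a ∈ V '' s, ∀ b ∈ V '' s, dist (g a) (g b) ≤ |a - b| := by
      intro a ha b hb
      wlog hab : a ≤ b generalizing a b
      · rw [dist_comm, abs_sub_comm]; exact this b hb a ha (le_of_not_ge hab)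
      have := hgspeed ha hb
      have hedist : edist (g a) (g b) ≤ eVariationOn g (V '' s ∩ Set.Icc a b) :=
        eVariationOn.edist_le g ⟨ha, le_rfl, hab⟩ ⟨hb, hab, le_rfl⟩
      rw [this] at hedist
      have := (ENNReal.toReal_mono ENNReal.ofReal_ne_top hedist)
      rw [← dist_edist] at this
      calc dist (g a) (g b) ≤ (ENNReal.ofReal ((1:ℝ≥0) * (b - a))).toReal := this
        _ = b - a := by
            rw [ENNReal.toReal_ofReal (by simp; linarith)]; simp
        _ ≤ |a - b| := by rw [abs_sub_comm]; exact le_abs_self _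
    -- [0, L] ⊆ V '' s via the intermediate value theorem
    have hVcont : ContinuousOn V s := (variation_lip hσlip).continuousOn
    have himage : Set.Icc (0:ℝ) L ⊆ V '' s := by
      have := intermediate_value_Icc (le_of_lt one_pos) hVcont
      rw [hV0] at this
      exact this
    -- the curve
    set Kr : ℝ := L / T with hKr
    have hKrnn : 0 ≤ Kr := div_nonneg hLnn hTpos.le
    have hKr1 : Kr < 1 := (div_lt_one hTpos).mpr hLT
    refine ⟨Kr.toNNReal, by rwa [Real.coe_toNNReal _ hKrnn], fun t => g (Kr * (t - t₀)), ?_, ?_, ?_⟩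
    · rw [lipschitzOnWith_iff_dist_le_mul]
      intro x hx y hy
      have hmem : ∀ u, u ∈ Set.Icc t₀ t₁ → Kr * (u - t₀) ∈ V '' s := by
        intro u hu
        apply himage
        constructor
        · have : 0 ≤ u - t₀ := by linarith [hu.1]
          positivity
        · have h1 : u - t₀ ≤ T := by simp only [hT]; linarith [hu.2]
          calc Kr * (u - t₀) ≤ Kr * T := by
                apply mul_le_mul_of_nonneg_left h1 hKrnn
            _ = L := by rw [hKr]; field_simp
      calc dist (g (Kr * (x - t₀))) (g (Kr * (y - t₀)))
          ≤ |Kr * (x - t₀) - Kr * (y - t₀)| := hglip _ (hmem x hx) _ (hmem y hy)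
        _ = Kr * |x - y| := by
            rw [← mul_sub]
            rw [abs_mul, abs_of_nonneg hKrnn]
            congr 1
            ring_nf
        _ = Kr.toNNReal * dist x y := by
            rw [Real.coe_toNNReal _ hKrnn, Real.dist_eq]
    · -- c t₀ = x₀
      show g (Kr * (t₀ - t₀)) = x₀
      have : Kr * (t₀ - t₀) = V 0 := by rw [hV0]; ring
      rw [this]
      have := edist_naturalParameterization_eq_zero hbv h0s h0s
      rw [edist_eq_zero] at this
      rw [hg]
      rw [this, hσ0]
    · -- c t₁ = x₁
      show g (Kr * (t₁ - t₀)) = x₁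
      have : Kr * (t₁ - t₀) = V 1 := by
        rw [← hL, hKr, ← hT]; field_simp
      rw [this]
      have := edist_naturalParameterization_eq_zero hbv h0s h1s
      rw [edist_eq_zero] at this
      rw [hg]
      rw [this, hσ1]
  · -- reverse direction
    rintro ⟨ht, K, hK1, c, hc, hc0, hc1⟩
    have hd : dist x₀ x₁ ≤ K * (t₁ - t₀) := by
      have := hc.dist_le_mul t₀ ⟨le_rfl, ht.le⟩ t₁ ⟨ht.le, le_rfl⟩
      rw [hc0, hc1, Real.dist_eq, abs_of_nonpos (by linarith)] at this
      linarith [this]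
    have : (K : ℝ) * (t₁ - t₀) < t₁ - t₀ := by
      have hK0 : (0:ℝ) ≤ K := K.coe_nonneg
      nlinarith
    linarith
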